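/- arXiv:1909.08123 — 4 statements merged into one kernel-verified Lean document; each statement's English description precedes it below -/
import Mathlib

section
/- Any maximal pairwise anticommuting subset of (𝔽₂)^{2n} has odd cardinality. -/
/-- The phase space `(𝔽₂)^{2n}`, modeled as pairs of vectors in `𝔽₂ⁿ`. -/
abbrev V (n : ℕ) := (Fin n → ZMod 2) × (Fin n → ZMod 2)

/-- The standard symplectic bilinear form `ω((a,b),(c,d)) = a·d + b·c`. -/
def sympl {n : ℕ} (P Q : V n) : ZMod 2 :=
  ∑ i, (P.1 i * Q.2 i + P.2 i * Q.1 i)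

/-- A finite set is (pairwise) anticommuting if `ω(P,Q) = 1` for all distinct `P, Q`. -/
def AC {n : ℕ} (G : Finset (V n)) : Prop :=
  ∀ P ∈ G, ∀ Q ∈ G, P ≠ Q → sympl P Q = 1

/-- A maximal pairwise anticommuting set: no strictly larger set is anticommuting. -/
def MaxAC {n : ℕ} (G : Finset (V n)) : Prop :=
  AC G ∧ ∀ H : Finset (V n), G ⊆ H → AC H → H = G

lemma sympl_self {n : ℕ} (P : V n) : sympl P P = 0 := by
  unfold sympl
  apply Finset.sum_eq_zero
  intro i _
  rw [mul_comm]
  exact CharTwo.add_self_eq_zero _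

lemma sympl_comm {n : ℕ} (P Q : V n) : sympl P Q = sympl Q P := by
  unfold sympl
  exact Finset.sum_congr rfl fun i _ => by ring

lemma sympl_zero_left {n : ℕ} (Q : V n) : sympl 0 Q = 0 := by
  simp [sympl]

lemma sympl_add_left {n : ℕ} (P P' Q : V n) :
    sympl (P + P') Q = sympl P Q + sympl P' Q := by
  unfold sympl
  rw [← Finset.sum_add_distrib]
  exact Finset.sum_congr rfl fun i _ => by
    simp [Prod.fst_add, Prod.snd_add, Pi.add_apply]; ring

lemma sympl_sum {n : ℕ} (s : Finset (V n)) (Q : V n) :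
    sympl (∑ P ∈ s, P) Q = ∑ P ∈ s, sympl P Q := by
  induction s using Finset.cons_induction with
  | empty => simp [sympl_zero_left]
  | cons a s ha ih => rw [Finset.sum_cons, Finset.sum_cons, sympl_add_left, ih]

theorem stmt_6 {n : ℕ} (G : Finset (V n)) (hG : MaxAC G) : Odd G.card := by
  by_contra h
  have heven : Even G.card := Nat.not_odd_iff_even.mp h
  -- G is nonempty
  have hne : G.Nonempty := by
    rcases G.eq_empty_or_nonempty with hE | hne
    · exfalso
      have hAC : AC ({0} : Finset (V n)) := by
        intro P hP Q hQ hPQ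
        simp at hP hQ
        exact absurd (hP.trans hQ.symm) hPQ
      have := hG.2 {0} (by simp [hE]) hAC
      simp [hE] at this
    · exact hne
  set S : V n := ∑ P ∈ G, P with hS
  have hSQ : ∀ Q ∈ G, sympl S Q = 1 := by
    intro Q hQ
    rw [hS, sympl_sum, ← Finset.add_sum_erase _ _ hQ, sympl_self, zero_add]
    have : ∀ P ∈ G.erase Q, sympl P Q = 1 := by
      intro P hP
      exact hG.1 P (Finset.mem_of_mem_erase hP) Q hQ (Finset.ne_of_mem_erase hP)
    rw [Finset.sum_congr rfl this, Finset.sum_const, nsmul_eq_mul, mul_one,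
      Finset.card_erase_of_mem hQ]
    have hodd : Odd (G.card - 1) :=
      Nat.Even.sub_odd (Nat.one_le_iff_ne_zero.mpr (Finset.card_ne_zero_of_mem hQ))
        heven odd_one
    obtain ⟨m, hm⟩ := hodd
    rw [hm]
    push_cast
    rw [show (2 : ZMod 2) = 0 from rfl]
    ring
  have hSnot : S ∉ G := by
    intro hSin
    have := hSQ S hSin
    rw [sympl_self] at this
    exact absurd this (by decide)
  have hACins : AC (insert S G) := by
    intro P hP Q hQ hPQ
    rcases Finset.mem_insert.mp hP with rfl | hP
    · rcases Finset.mem_insert.mp hQ with rfl | hQ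
      · exact absurd rfl hPQ
      · exact hSQ Q hQ
    · rcases Finset.mem_insert.mp hQ with rfl | hQ
      · rw [sympl_comm]; exact hSQ P hP
      · exact hG.1 P hP Q hQ hPQ
  have := hG.2 (insert S G) (Finset.subset_insert _ _) hACins
  exact hSnot (Finset.insert_eq_self.mp this)
end

section
/- Any pairwise anticommuting subset G ⊆ (𝔽₂)^{2n} satisfies |G| ≤ 2n + 1. -/
lemma sympl_sum_left {n : ℕ} (T : Finset (V n)) (Q : V n) :
    sympl (∑ P ∈ T, P) Q = ∑ P ∈ T, sympl P Q := by
  simp only [sympl, Prod.fst_sum, Prod.snd_sum, Finset.sum_apply, Finset.sum_mul,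
    ← Finset.sum_add_distrib]
  rw [Finset.sum_comm]

lemma finrank_V (n : ℕ) : Module.finrank (ZMod 2) (V n) = 2 * n := by
  rw [Module.finrank_prod, Module.finrank_pi]
  simp [two_mul]

theorem stmt_12 {n : ℕ} (G : Finset (V n)) (hG : AC G) : G.card ≤ 2 * n + 1 := by
  by_contra h
  push_neg at h
  -- pick an element P₀
  obtain ⟨P₀, hP₀⟩ : ∃ P, P ∈ G := Finset.card_pos.mp (by omega)
  set G' := G.erase P₀ with hG'
  have hcard : 2 * n + 1 ≤ G'.card := by
    rw [hG', Finset.card_erase_of_mem hP₀]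
    omega
  -- G' is not linearly independent
  have hdep : ¬ LinearIndependent (ZMod 2) (fun x => x : G' → V n) := by
    intro hli
    have := hli.finset_card_le_finrank
    rw [finrank_V] at this
    omega
  rw [Fintype.not_linearIndependent_iff] at hdep
  obtain ⟨g, hsum, i₀, hi₀⟩ := hdep
  -- the subset T of G' where g = 1
  set T : Finset (V n) := (G'.attach.filter (fun i => g i = 1)).image Subtype.val with hT
  have hTsub : T ⊆ G' := by
    intro x hx
    simp only [hT, Finset.mem_image, Finset.mem_filter] at hx
    obtain ⟨⟨y, hy⟩, _, rfl⟩ := hx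
    exact hy
  have hTsum : ∑ P ∈ T, P = 0 := by
    rw [hT, Finset.sum_image (by intro a _ b _ h; exact Subtype.ext h)]
    rw [show (Finset.univ : Finset {x // x ∈ G'}) = G'.attach from Finset.univ_eq_attach _] at hsum
    rw [← hsum, ← Finset.sum_filter_add_sum_filter_not G'.attach (fun i => g i = 1)]
    have h1 : ∀ i ∈ G'.attach.filter (fun i => g i = 1), g i • (i : V n) = (i : V n) := by
      intro i hi
      rw [(Finset.mem_filter.mp hi).2, one_smul]
    have h2 : ∀ i ∈ G'.attach.filter (fun i => ¬ g i = 1), g i • (i : V n) = 0 := by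
      intro i hi
      have : g i = 0 := by
        have h2' := (Finset.mem_filter.mp hi).2
        revert h2'; generalize g i = a; revert a; decide
      rw [this, zero_smul]
    rw [Finset.sum_congr rfl h1, Finset.sum_congr rfl h2, Finset.sum_const_zero, add_zero]
  have hi₀1 : g i₀ = 1 := by
    revert hi₀; generalize g i₀ = a; revert a; decide
  have hi₀T : (i₀ : V n) ∈ T := by
    rw [hT]
    exact Finset.mem_image_of_mem _ (Finset.mem_filter.mpr ⟨Finset.mem_attach _ _, hi₀1⟩)
  -- pairing with P₀ ∉ T : sum of sympl = |T| = 0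
  have hP₀notT : P₀ ∉ T := fun h => (Finset.notMem_erase P₀ G) (hTsub h)
  have key : ∀ Q : V n, sympl (∑ P ∈ T, P) Q = ∑ P ∈ T, sympl P Q := sympl_sum_left T
  have hzero : ∀ Q : V n, ∑ P ∈ T, sympl P Q = 0 := by
    intro Q; rw [← key, hTsum]; simp [sympl]
  -- with Q = P₀ : every term is 1
  have hcard0 : ((T.card : ℕ) : ZMod 2) = 0 := by
    have := hzero P₀
    rw [Finset.sum_congr rfl (fun P hP => hG P (Finset.mem_of_mem_erase (hTsub hP)) P₀ hP₀
      (fun h => hP₀notT (h ▸ hP)))] at this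
    simpa using this
  -- with Q = i₀ ∈ T : terms are 1 except the self term which is 0
  have hcard1 : ((T.card : ℕ) : ZMod 2) = 1 := by
    have h0 := hzero (i₀ : V n)
    rw [← Finset.add_sum_erase _ _ hi₀T, sympl_self] at h0
    have hmem : ∀ P ∈ T.erase (i₀ : V n), sympl P (i₀ : V n) = 1 := by
      intro P hP
      exact hG P (Finset.mem_of_mem_erase (hTsub (Finset.mem_of_mem_erase hP)))
        (i₀ : V n) (Finset.mem_of_mem_erase (hTsub hi₀T)) (Finset.ne_of_mem_erase hP)
    rw [Finset.sum_congr rfl hmem] at h0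
    simp only [Finset.sum_const, nsmul_eq_mul, mul_one, zero_add] at h0
    rw [Finset.card_erase_of_mem hi₀T] at h0
    have hpos : 1 ≤ T.card := Finset.card_pos.mpr ⟨_, hi₀T⟩
    have : ((T.card - 1 + 1 : ℕ) : ZMod 2) = 1 := by
      rw [Nat.cast_add, h0, Nat.cast_one, zero_add]
    rwa [Nat.sub_add_cancel hpos] at this
  rw [hcard0] at hcard1
  exact absurd hcard1 (by decide)
end

section
/- Let S be a finite set with |S| = m even, and v : S → 𝔽₂ any function. Define F_v : 𝒫(S) × S → 𝔽₂ by F_v(T,x) = v(x) + |T| + 1 (mod 2) if x ∈ T, and v(x) + |T| (mod 2) if x ∉ T. Then for every function q : S → 𝔽₂ there exists a unique subset U ⊆ S with F_v(U,·) = q. -/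
/-- `F_v(T,x) = v(x) + |T| + 1` if `x ∈ T`, and `v(x) + |T|` otherwise (mod 2). -/
def Fv {α : Type*} [DecidableEq α] (v : α → ZMod 2) (T : Finset α) (x : α) : ZMod 2 :=
  if x ∈ T then v x + T.card + 1 else v x + T.card

theorem stmt_16 {α : Type*} [DecidableEq α] (S : Finset α) (hS : Even S.card)
    (v q : α → ZMod 2) :
    ∃! U : Finset α, U ⊆ S ∧ ∀ x ∈ S, Fv v U x = q x := by
  classical
  set A := S.filter (fun x => q x = v x + 1) with hA
  set B := S.filter (fun x => q x = v x) with hB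
  have hz : ∀ c : ZMod 2, c = 0 ∨ c = 1 := by decide
  have hone : (1 : ZMod 2) ≠ 0 := by decide
  have hne1 : ∀ a b : ZMod 2, a = b + 1 → b = a → False := by decide
  have hne2 : ∀ a b : ZMod 2, a + 1 = b → b = a → False := by decide
  have htwo : ∀ a b : ZMod 2, a + 1 + 1 = b → b = a := by decide
  have hadd : ∀ a : ZMod 2, a + 1 + 1 = a := by decide
  have hdi : ∀ x, q x = v x ∨ q x = v x + 1 := by
    intro x
    have h1 : q x = v x + (q x - v x) := by ring
    rcases hz (q x - v x) with h | h
    · left; rw [h, add_zero] at h1; exact h1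
    · right; rw [h] at h1; exact h1
  have hiff : ∀ a b : ZMod 2, (a = b ↔ ¬ (a = b + 1)) := by decide
  have hBeq : B = S.filter (fun x => ¬ (q x = v x + 1)) := by
    ext x
    simp only [hB, Finset.mem_filter]
    constructor
    · rintro ⟨h1, h2⟩; exact ⟨h1, (hiff _ _).mp h2⟩
    · rintro ⟨h1, h2⟩; exact ⟨h1, (hiff _ _).mpr h2⟩
  have hsum : A.card + B.card = S.card := by
    rw [hA, hBeq]
    exact Finset.card_filter_add_card_filter_not _
  have hScast : ((S.card : ZMod 2)) = 0 := by
    obtain ⟨k, hk⟩ := hS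
    rw [hk]
    push_cast
    rw [← two_mul, show (2 : ZMod 2) = 0 by decide, zero_mul]
  have hsumcast : (A.card : ZMod 2) + (B.card : ZMod 2) = 0 := by
    rw [← Nat.cast_add, hsum, hScast]
  have key : ∀ U : Finset α, U ⊆ S → (∀ x ∈ S, Fv v U x = q x) →
      ((U.card : ZMod 2) = 0 ∧ U = A) ∨ ((U.card : ZMod 2) = 1 ∧ U = B) := by
    intro U hU hq
    rcases hz (U.card : ZMod 2) with h | h
    · left; refine ⟨h, ?_⟩
      ext x
      simp only [hA, Finset.mem_filter]
      constructor
      · intro hx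
        refine ⟨hU hx, ?_⟩
        have hFv := hq x (hU hx)
        simp only [Fv, if_pos hx, h, add_zero] at hFv
        exact hFv.symm
      · rintro ⟨hxS, hxq⟩
        by_contra hxU
        have hFv := hq x hxS
        simp only [Fv, if_neg hxU, h, add_zero] at hFv
        exact hne1 (q x) (v x) hxq hFv
    · right; refine ⟨h, ?_⟩
      ext x
      simp only [hB, Finset.mem_filter]
      constructor
      · intro hx
        refine ⟨hU hx, ?_⟩
        have hFv := hq x (hU hx)
        simp only [Fv, if_pos hx, h] at hFv
        exact htwo _ _ hFv
      · rintro ⟨hxS, hxq⟩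
        by_contra hxU
        have hFv := hq x hxS
        simp only [Fv, if_neg hxU, h] at hFv
        exact hne2 (v x) (q x) hFv hxq
  by_cases hpar : (A.card : ZMod 2) = 0
  · refine ⟨A, ⟨Finset.filter_subset _ _, ?_⟩, ?_⟩
    · intro x hxS
      by_cases hx : x ∈ A
      · have hxq : q x = v x + 1 := (Finset.mem_filter.mp hx).2
        simp only [Fv, if_pos hx, hpar, add_zero]
        exact hxq.symm
      · have hxq : q x = v x := by
          rcases hdi x with hd | hd
          · exact hd
          · exact absurd (Finset.mem_filter.mpr ⟨hxS, hd⟩) hx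
        simp only [Fv, if_neg hx, hpar, add_zero]
        exact hxq.symm
    · rintro U ⟨hU, hq⟩
      rcases key U hU hq with ⟨_, hUA⟩ | ⟨hc, hUB⟩
      · exact hUA
      · exfalso
        rw [hUB] at hc
        have h0 := hsumcast
        rw [hpar, hc, zero_add] at h0
        exact hone h0
  · have hA1 : (A.card : ZMod 2) = 1 := (hz _).resolve_left hpar
    have hB1 : (B.card : ZMod 2) = 1 := by
      have h0 := hsumcast
      rw [hA1] at h0
      rcases hz (B.card : ZMod 2) with h | h
      · exfalso; rw [h, add_zero] at h0; exact hone h0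
      · exact h
    refine ⟨B, ⟨Finset.filter_subset _ _, ?_⟩, ?_⟩
    · intro x hxS
      by_cases hx : x ∈ B
      · have hxq : q x = v x := (Finset.mem_filter.mp hx).2
        simp only [Fv, if_pos hx, hB1]
        rw [hxq]
        exact hadd _
      · have hxq : q x = v x + 1 := by
          rcases hdi x with hd | hd
          · exact absurd (Finset.mem_filter.mpr ⟨hxS, hd⟩) hx
          · exact hd
        simp only [Fv, if_neg hx, hB1]
        exact hxq.symm
    · rintro U ⟨hU, hq⟩
      rcases key U hU hq with ⟨hc, hUA⟩ | ⟨_, hUB⟩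
      · exact absurd (hUA ▸ hc) hpar
      · exact hUB
end

section
/- Let S be a finite set with |S| = m odd, and v, q : S → 𝔽₂ functions. Define F_v(T,x) = v(x) + |T| + 1 (mod 2) if x ∈ T, and v(x) + |T| (mod 2) otherwise. If Σ_{x∈S} q(x) ≡ Σ_{x∈S} v(x) (mod 2), then there exist exactly two subsets of S, namely some V and its complement S \ V, with F_v(V,·) = F_v(S\V,·) = q; if the parities differ, no subset T satisfies F_v(T,·) = q. -/
theorem stmt_17 {α : Type*} [DecidableEq α] (S : Finset α) (hS : Odd S.card)
    (v q : α → ZMod 2) :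
    ((∑ x ∈ S, q x) = (∑ x ∈ S, v x) →
      ∃ W ⊆ S, W ≠ S \ W ∧
        (∀ x ∈ S, Fv v W x = q x) ∧ (∀ x ∈ S, Fv v (S \ W) x = q x) ∧
        (∀ T ⊆ S, (∀ x ∈ S, Fv v T x = q x) → T = W ∨ T = S \ W)) ∧
    ((∑ x ∈ S, q x) ≠ (∑ x ∈ S, v x) →
      ∀ T ⊆ S, ¬ (∀ x ∈ S, Fv v T x = q x)) := by
  classical
  have hScard : ((S.card : ℕ) : ZMod 2) = 1 := by
    have h2 := Nat.odd_iff.mp hS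
    rw [← ZMod.natCast_mod S.card 2, h2, Nat.cast_one]
  -- main pointwise consequence
  have main : ∀ T : Finset α, T ⊆ S → (∀ x ∈ S, Fv v T x = q x) →
      ∀ x ∈ S, v x + q x = (T.card : ZMod 2) + (if x ∈ T then 1 else 0) := by
    intro T hTS hT x hx
    have h := hT x hx
    unfold Fv at h
    by_cases hxT : x ∈ T
    · simp only [hxT, if_true] at h ⊢
      have key : ∀ a b t : ZMod 2, a + t + 1 = b → a + b = t + 1 := by decide
      exact key _ _ _ h
    · simp only [hxT, if_false] at h ⊢
      have key : ∀ a b t : ZMod 2, a + t = b → a + b = t + 0 := by decide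
      exact key _ _ _ h
  -- any solution forces the parity condition
  have sumEq : ∀ T : Finset α, T ⊆ S → (∀ x ∈ S, Fv v T x = q x) →
      (∑ x ∈ S, q x) = (∑ x ∈ S, v x) := by
    intro T hTS hT
    have h1 : ∑ x ∈ S, (v x + q x)
        = ∑ x ∈ S, ((T.card : ZMod 2) + if x ∈ T then 1 else 0) :=
      Finset.sum_congr rfl (main T hTS hT)
    rw [Finset.sum_add_distrib, Finset.sum_add_distrib, Finset.sum_const,
      Finset.sum_boole, Finset.filter_mem_eq_inter,
      Finset.inter_eq_right.mpr hTS, nsmul_eq_mul, hScard, one_mul] at h1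
    have h2 : (∑ x ∈ S, v x) + (∑ x ∈ S, q x) = 0 := by
      rw [h1]
      have : ∀ t : ZMod 2, t + t = 0 := by decide
      exact this _
    have key : ∀ a b : ZMod 2, a + b = 0 → b = a := by decide
    exact key _ _ h2
  constructor
  · intro h
    set W : Finset α := S.filter (fun x => v x + q x = 1) with hWdef
    have hWS : W ⊆ S := Finset.filter_subset _ _
    have hWmem : ∀ x, x ∈ W ↔ x ∈ S ∧ v x + q x = 1 := fun x => Finset.mem_filter
    have hWcard : ((W.card : ℕ) : ZMod 2) = 0 := by
      have : (W.card : ℕ) = ∑ x ∈ S, if v x + q x = 1 then 1 else 0 :=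
        Finset.card_filter _ _
      rw [this, Nat.cast_sum]
      have step : ∀ x ∈ S, ((if v x + q x = 1 then (1:ℕ) else 0 : ℕ) : ZMod 2)
          = v x + q x := by
        intro x _
        by_cases hx : v x + q x = 1
        · simp [hx]
        · have : ∀ a : ZMod 2, a ≠ 1 → a = 0 := by decide
          simp [hx, this _ hx]
      rw [Finset.sum_congr rfl step, Finset.sum_add_distrib, h]
      have : ∀ t : ZMod 2, t + t = 0 := by decide
      exact this _
    have hSWcard : (((S \ W).card : ℕ) : ZMod 2) = 1 := by
      rw [Finset.card_sdiff_of_subset hWS, Nat.cast_sub (Finset.card_le_card hWS), hWcard,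
        hScard, sub_zero]
    refine ⟨W, hWS, ?_, ?_, ?_, ?_⟩
    · intro hEq
      have hc := Finset.card_sdiff_of_subset hWS
      rw [← hEq] at hc
      have hle := Finset.card_le_card hWS
      have h2 := Nat.odd_iff.mp hS
      omega
    · intro x hx
      unfold Fv
      by_cases hxW : x ∈ W
      · have hv : v x + q x = 1 := ((hWmem x).mp hxW).2
        simp only [hxW, if_true, hWcard]
        have key : ∀ a b : ZMod 2, a + b = 1 → a + 0 + 1 = b := by decide
        exact key _ _ hv
      · have hv : v x + q x ≠ 1 := fun hc => hxW ((hWmem x).mpr ⟨hx, hc⟩)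
        simp only [hxW, if_false, hWcard]
        have key : ∀ a b : ZMod 2, a + b ≠ 1 → a + 0 = b := by decide
        exact key _ _ hv
    · intro x hx
      unfold Fv
      by_cases hxW : x ∈ S \ W
      · have hxnW : x ∉ W := (Finset.mem_sdiff.mp hxW).2
        have hv : v x + q x ≠ 1 := fun hc => hxnW ((hWmem x).mpr ⟨hx, hc⟩)
        simp only [hxW, if_true, hSWcard]
        have key : ∀ a b : ZMod 2, a + b ≠ 1 → a + 1 + 1 = b := by decide
        exact key _ _ hv
      · have hxWm : x ∈ W := by
          by_contra hc
          exact hxW (Finset.mem_sdiff.mpr ⟨hx, hc⟩)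
        have hv : v x + q x = 1 := ((hWmem x).mp hxWm).2
        simp only [hxW, if_false, hSWcard]
        have key : ∀ a b : ZMod 2, a + b = 1 → a + 1 = b := by decide
        exact key _ _ hv
    · intro T hTS hT
      have hm := main T hTS hT
      have htc : ((T.card : ℕ) : ZMod 2) = 0 ∨ ((T.card : ℕ) : ZMod 2) = 1 := by
        have : ∀ t : ZMod 2, t = 0 ∨ t = 1 := by decide
        exact this _
      rcases htc with ht | ht
      · left
        ext x
        constructor
        · intro hxT
          have hxS := hTS hxT
          have := hm x hxS
          rw [ht] at this
          simp only [hxT, if_true] at this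
          exact (hWmem x).mpr ⟨hxS, by
            have key : ∀ a b : ZMod 2, a + b = 0 + 1 → a + b = 1 := by decide
            exact key _ _ this⟩
        · intro hxW
          have hxS := hWS hxW
          have hv : v x + q x = 1 := ((hWmem x).mp hxW).2
          by_contra hxT
          have := hm x hxS
          rw [ht] at this
          simp only [hxT, if_false] at this
          rw [hv] at this
          exact absurd this (by decide)
      · right
        ext x
        constructor
        · intro hxT
          have hxS := hTS hxT
          have := hm x hxS
          rw [ht] at this
          simp only [hxT, if_true] at this
          refine Finset.mem_sdiff.mpr ⟨hxS, fun hxW => ?_⟩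
          have hv : v x + q x = 1 := ((hWmem x).mp hxW).2
          rw [hv] at this
          exact absurd this (by decide)
        · intro hxSW
          have hxS := (Finset.mem_sdiff.mp hxSW).1
          have hxnW := (Finset.mem_sdiff.mp hxSW).2
          have hv : v x + q x ≠ 1 := fun hc => hxnW ((hWmem x).mpr ⟨hxS, hc⟩)
          by_contra hxT
          have := hm x hxS
          rw [ht] at this
          simp only [hxT, if_false] at this
          have key : ∀ a b : ZMod 2, a + b = 1 + 0 → a + b = 1 := by decide
          exact hv (key _ _ this)
  · intro hne T hTS hT
    exact hne (sumEq T hTS hT)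
end
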